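/- For every integer L ≥ 1 and all real numbers η₀, η₁, …, η_{L+1}: (L+1)·(η₀ + η₁ + ⋯ + η_{L+1})^L = (1/2) · Σ over all subsets F of {0, 1, …, L+1} with 1 ≤ #F ≤ L+1, of (Σ_{i∈F} ηᵢ)^{#F − 1} · (Σ_{i∉F} ηᵢ)^{(L+2−#F) − 1}. -/

import Mathlib

open Finset

variable {ι : Type*} [DecidableEq ι]

noncomputable def phiH (η : ι → ℝ) (x : ℝ) (A : Finset ι) : ℝ :=
  if A = ∅ then 1 else x * (x + ∑ i ∈ A, η i) ^ (A.card - 1)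

lemma phiH_empty (η : ι → ℝ) (x : ℝ) : phiH η x ∅ = 1 := by simp [phiH]

lemma phiH_ne (η : ι → ℝ) (x : ℝ) {A : Finset ι} (h : A ≠ ∅) :
    phiH η x A = x * (x + ∑ i ∈ A, η i) ^ (A.card - 1) := by simp [phiH, h]

/-- reindexing a powerset sum by complement within S -/
lemma sum_powerset_sdiff (S : Finset ι) (g : Finset ι → ℝ) :
    ∑ A ∈ S.powerset, g (S \ A) = ∑ A ∈ S.powerset, g A := by
  apply Finset.sum_nbij' (i := fun A => S \ A) (j := fun A => S \ A)
  · intro A _; exact mem_powerset.mpr sdiff_subset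
  · intro A _; exact mem_powerset.mpr sdiff_subset
  · intro A hA; exact Finset.sdiff_sdiff_eq_self (mem_powerset.mp hA)
  · intro A hA; exact Finset.sdiff_sdiff_eq_self (mem_powerset.mp hA)
  · intro A _; rfl

lemma keyF (η : ι → ℝ) (S : Finset ι) : ∀ x y : ℝ,
    (∑ A ∈ S.powerset, phiH η x A * (y + ∑ i ∈ S \ A, η i) ^ (S \ A).card)
      = (x + y + ∑ i ∈ S, η i) ^ S.card := by
  induction S using Finset.strongInduction with
  | _ S ih =>
  intro x y
  rcases S.eq_empty_or_nonempty with rfl | hS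
  · simp [phiH_empty]
  obtain ⟨a, ha⟩ := hS
  set S' : Finset ι := S.erase a with hS'def
  have haS' : a ∉ S' := Finset.notMem_erase a S
  have hins : S = insert a S' := (Finset.insert_erase ha).symm
  have hcard : S.card = S'.card + 1 := by
    conv_lhs => rw [hins]
    rw [Finset.card_insert_of_notMem haS']
  have hsub : S' ⊂ S := Finset.erase_ssubset ha
  have hepsS : ∑ i ∈ S, η i = η a + ∑ i ∈ S', η i := by
    conv_lhs => rw [hins]
    rw [Finset.sum_insert haS']
  -- G identity
  have hG : ∀ u v : ℝ,
      (∑ A ∈ S.powerset, phiH η u A * phiH η v (S \ A))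
        = (u + v) * (u + v + ∑ i ∈ S, η i) ^ (S.card - 1) := by
    intro u v
    have h1 : (∑ t ∈ S'.powerset, phiH η u t * phiH η v (insert a S' \ t))
        = v * (u + (v + η a) + ∑ i ∈ S', η i) ^ S'.card := by
      have key : ∀ t ∈ S'.powerset,
          phiH η u t * phiH η v (insert a S' \ t)
            = v * (phiH η u t * ((v + η a) + ∑ i ∈ S' \ t, η i) ^ (S' \ t).card) := by
        intro t ht
        rw [mem_powerset] at ht
        have hat : a ∉ t := fun h => haS' (ht h)
        have hsd : insert a S' \ t = insert a (S' \ t) :=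
          Finset.insert_sdiff_of_notMem _ hat
        have hane : insert a (S' \ t) ≠ ∅ := Finset.insert_ne_empty _ _
        have haSd : a ∉ S' \ t := fun h => haS' (Finset.mem_sdiff.mp h).1
        rw [hsd, phiH_ne η v hane, Finset.sum_insert haSd,
          Finset.card_insert_of_notMem haSd, Nat.add_sub_cancel]
        ring_nf
      rw [Finset.sum_congr rfl key, ← Finset.mul_sum, ih S' hsub u (v + η a)]
    have h2 : (∑ t ∈ S'.powerset, phiH η u (insert a t) * phiH η v (insert a S' \ insert a t))
        = u * (v + (u + η a) + ∑ i ∈ S', η i) ^ S'.card := by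
      have key : ∀ t ∈ S'.powerset,
          phiH η u (insert a t) * phiH η v (insert a S' \ insert a t)
            = u * (phiH η v (S' \ t) * ((u + η a) + ∑ i ∈ t, η i) ^ t.card) := by
        intro t ht
        rw [mem_powerset] at ht
        have hat : a ∉ t := fun h => haS' (ht h)
        have hsd : insert a S' \ insert a t = S' \ t := by
          rw [Finset.insert_sdiff_insert, Finset.sdiff_insert_of_notMem haS']
        have hane : insert a t ≠ ∅ := Finset.insert_ne_empty _ _
        rw [hsd, phiH_ne η u hane, Finset.sum_insert hat,
          Finset.card_insert_of_notMem hat, Nat.add_sub_cancel]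
        ring_nf
      rw [Finset.sum_congr rfl key, ← Finset.mul_sum]
      have hre : (∑ t ∈ S'.powerset, phiH η v (S' \ t) * ((u + η a) + ∑ i ∈ t, η i) ^ t.card)
          = ∑ t ∈ S'.powerset,
              phiH η v t * ((u + η a) + ∑ i ∈ S' \ t, η i) ^ (S' \ t).card := by
        rw [← sum_powerset_sdiff S'
          (fun t => phiH η v t * ((u + η a) + ∑ i ∈ S' \ t, η i) ^ (S' \ t).card)]
        refine Finset.sum_congr rfl fun t ht => ?_
        rw [Finset.sdiff_sdiff_eq_self (mem_powerset.mp ht)]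
      rw [hre, ih S' hsub v (u + η a)]
    conv_lhs => rw [hins, Finset.sum_powerset_insert haS']
    rw [h1, h2, hcard, Nat.add_sub_cancel, hepsS]
    ring
  -- F minus G
  have hdiff : (∑ A ∈ S.powerset, phiH η x A * (y + ∑ i ∈ S \ A, η i) ^ (S \ A).card)
      - (∑ A ∈ S.powerset, phiH η x A * phiH η y (S \ A))
      = (∑ i ∈ S, η i) * (x + y + ∑ i ∈ S, η i) ^ (S.card - 1) := by
    rw [← Finset.sum_sub_distrib]
    have hterm : ∀ A ∈ S.powerset,
        phiH η x A * (y + ∑ i ∈ S \ A, η i) ^ (S \ A).card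
          - phiH η x A * phiH η y (S \ A)
        = ∑ b ∈ S \ A,
            η b * (phiH η x A * (y + ∑ i ∈ S \ A, η i) ^ ((S \ A).card - 1)) := by
      intro A hA
      rcases eq_or_ne (S \ A) ∅ with he | he
      · rw [he]; simp [phiH_empty]
      · have hk : 1 ≤ (S \ A).card :=
          Finset.card_pos.mpr (Finset.nonempty_iff_ne_empty.mpr he)
        have hp : (y + ∑ i ∈ S \ A, η i) ^ (S \ A).card
            = (y + ∑ i ∈ S \ A, η i) * (y + ∑ i ∈ S \ A, η i) ^ ((S \ A).card - 1) := by
          conv_lhs => rw [← Nat.sub_add_cancel hk]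
          rw [pow_succ]; ring
        rw [phiH_ne η y he, ← Finset.sum_mul, hp]
        ring
    rw [Finset.sum_congr rfl hterm]
    have hswap : (∑ A ∈ S.powerset, ∑ b ∈ S \ A,
          η b * (phiH η x A * (y + ∑ i ∈ S \ A, η i) ^ ((S \ A).card - 1)))
        = ∑ b ∈ S, ∑ A ∈ (S.erase b).powerset,
          η b * (phiH η x A * (y + ∑ i ∈ S \ A, η i) ^ ((S \ A).card - 1)) := by
      apply Finset.sum_comm'
      intro A b
      simp only [mem_powerset, Finset.mem_sdiff, Finset.subset_erase]
      tauto
    rw [hswap]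
    have hinner : ∀ b ∈ S, (∑ A ∈ (S.erase b).powerset,
          η b * (phiH η x A * (y + ∑ i ∈ S \ A, η i) ^ ((S \ A).card - 1)))
        = η b * (x + y + ∑ i ∈ S, η i) ^ (S.card - 1) := by
      intro b hb
      rw [← Finset.mul_sum]
      congr 1
      have hbe : b ∉ S.erase b := Finset.notMem_erase b S
      have hsumb : ∑ i ∈ S, η i = η b + ∑ i ∈ S.erase b, η i := by
        conv_lhs => rw [← Finset.insert_erase hb]
        rw [Finset.sum_insert hbe]
      have hcb : S.card = (S.erase b).card + 1 := by
        conv_lhs => rw [← Finset.insert_erase hb]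
        rw [Finset.card_insert_of_notMem hbe]
      have key : ∀ A ∈ (S.erase b).powerset,
          phiH η x A * (y + ∑ i ∈ S \ A, η i) ^ ((S \ A).card - 1)
          = phiH η x A * ((y + η b) + ∑ i ∈ S.erase b \ A, η i) ^ (S.erase b \ A).card := by
        intro A hA
        rw [mem_powerset] at hA
        have hbA : b ∉ A := fun h => hbe (hA h)
        have hbSd : b ∉ S.erase b \ A := fun h => hbe (Finset.mem_sdiff.mp h).1
        have hsd : S \ A = insert b (S.erase b \ A) := by
          ext i
          simp only [Finset.mem_sdiff, Finset.mem_insert, Finset.mem_erase]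
          constructor
          · rintro ⟨hiS, hiA⟩
            by_cases h : i = b
            · exact Or.inl h
            · exact Or.inr ⟨⟨h, hiS⟩, hiA⟩
          · rintro (rfl | ⟨⟨_, hiS⟩, hiA⟩)
            · exact ⟨hb, hbA⟩
            · exact ⟨hiS, hiA⟩
        rw [hsd, Finset.sum_insert hbSd, Finset.card_insert_of_notMem hbSd,
          Nat.add_sub_cancel]
        ring_nf
      rw [Finset.sum_congr rfl key,
        ih (S.erase b) (Finset.erase_ssubset hb) x (y + η b),
        hsumb, hcb, Nat.add_sub_cancel]
      congr 1
      ring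
    rw [Finset.sum_congr rfl hinner, ← Finset.sum_mul]
  rw [hG x y] at hdiff
  have hfin : (∑ A ∈ S.powerset, phiH η x A * (y + ∑ i ∈ S \ A, η i) ^ (S \ A).card)
      = (x + y + ∑ i ∈ S, η i) * (x + y + ∑ i ∈ S, η i) ^ (S.card - 1) := by
    linarith [hdiff]
  rw [hfin, hcard, Nat.add_sub_cancel, ← pow_succ']

lemma keyDiff (η : ι → ℝ) (S : Finset ι) (x y : ℝ) :
    (∑ A ∈ S.powerset, phiH η x A * (y + ∑ i ∈ S \ A, η i) ^ (S \ A).card)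
      - (∑ A ∈ S.powerset, phiH η x A * phiH η y (S \ A))
      = (∑ i ∈ S, η i) * (x + y + ∑ i ∈ S, η i) ^ (S.card - 1) := by
  rw [← Finset.sum_sub_distrib]
  have hterm : ∀ A ∈ S.powerset,
      phiH η x A * (y + ∑ i ∈ S \ A, η i) ^ (S \ A).card
        - phiH η x A * phiH η y (S \ A)
      = ∑ b ∈ S \ A,
          η b * (phiH η x A * (y + ∑ i ∈ S \ A, η i) ^ ((S \ A).card - 1)) := by
    intro A hA
    rcases eq_or_ne (S \ A) ∅ with he | he
    · rw [he]; simp [phiH_empty]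
    · have hk : 1 ≤ (S \ A).card :=
        Finset.card_pos.mpr (Finset.nonempty_iff_ne_empty.mpr he)
      have hp : (y + ∑ i ∈ S \ A, η i) ^ (S \ A).card
          = (y + ∑ i ∈ S \ A, η i) * (y + ∑ i ∈ S \ A, η i) ^ ((S \ A).card - 1) := by
        conv_lhs => rw [← Nat.sub_add_cancel hk]
        rw [pow_succ]; ring
      rw [phiH_ne η y he, ← Finset.sum_mul, hp]
      ring
  rw [Finset.sum_congr rfl hterm]
  have hswap : (∑ A ∈ S.powerset, ∑ b ∈ S \ A,
        η b * (phiH η x A * (y + ∑ i ∈ S \ A, η i) ^ ((S \ A).card - 1)))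
      = ∑ b ∈ S, ∑ A ∈ (S.erase b).powerset,
        η b * (phiH η x A * (y + ∑ i ∈ S \ A, η i) ^ ((S \ A).card - 1)) := by
    apply Finset.sum_comm'
    intro A b
    simp only [mem_powerset, Finset.mem_sdiff, Finset.subset_erase]
    tauto
  rw [hswap]
  have hinner : ∀ b ∈ S, (∑ A ∈ (S.erase b).powerset,
        η b * (phiH η x A * (y + ∑ i ∈ S \ A, η i) ^ ((S \ A).card - 1)))
      = η b * (x + y + ∑ i ∈ S, η i) ^ (S.card - 1) := by
    intro b hb
    rw [← Finset.mul_sum]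
    congr 1
    have hbe : b ∉ S.erase b := Finset.notMem_erase b S
    have hsumb : ∑ i ∈ S, η i = η b + ∑ i ∈ S.erase b, η i := by
      conv_lhs => rw [← Finset.insert_erase hb]
      rw [Finset.sum_insert hbe]
    have hcb : S.card = (S.erase b).card + 1 := by
      conv_lhs => rw [← Finset.insert_erase hb]
      rw [Finset.card_insert_of_notMem hbe]
    have key : ∀ A ∈ (S.erase b).powerset,
        phiH η x A * (y + ∑ i ∈ S \ A, η i) ^ ((S \ A).card - 1)
        = phiH η x A * ((y + η b) + ∑ i ∈ S.erase b \ A, η i) ^ (S.erase b \ A).card := by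
      intro A hA
      rw [mem_powerset] at hA
      have hbA : b ∉ A := fun h => hbe (hA h)
      have hbSd : b ∉ S.erase b \ A := fun h => hbe (Finset.mem_sdiff.mp h).1
      have hsd : S \ A = insert b (S.erase b \ A) := by
        ext i
        simp only [Finset.mem_sdiff, Finset.mem_insert, Finset.mem_erase]
        constructor
        · rintro ⟨hiS, hiA⟩
          by_cases h : i = b
          · exact Or.inl h
          · exact Or.inr ⟨⟨h, hiS⟩, hiA⟩
        · rintro (rfl | ⟨⟨_, hiS⟩, hiA⟩)
          · exact ⟨hb, hbA⟩
          · exact ⟨hiS, hiA⟩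
      rw [hsd, Finset.sum_insert hbSd, Finset.card_insert_of_notMem hbSd,
        Nat.add_sub_cancel]
      ring_nf
    rw [Finset.sum_congr rfl key, keyF η (S.erase b) x (y + η b),
      hsumb, hcb, Nat.add_sub_cancel]
    congr 1
    ring
  rw [Finset.sum_congr rfl hinner, ← Finset.sum_mul]

lemma keyG (η : ι → ℝ) (S : Finset ι) (hS : S.Nonempty) (x y : ℝ) :
    (∑ A ∈ S.powerset, phiH η x A * phiH η y (S \ A))
      = (x + y) * (x + y + ∑ i ∈ S, η i) ^ (S.card - 1) := by
  have h1 := keyDiff η S x y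
  rw [keyF η S x y] at h1
  have hk : 1 ≤ S.card := Finset.card_pos.mpr hS
  have hp : (x + y + ∑ i ∈ S, η i) ^ S.card
      = (x + y + ∑ i ∈ S, η i) * (x + y + ∑ i ∈ S, η i) ^ (S.card - 1) := by
    conv_lhs => rw [← Nat.sub_add_cancel hk]
    rw [pow_succ]; ring
  rw [hp] at h1
  linarith [h1]

theorem stmt13 (L : ℕ) (hL : 1 ≤ L) (η : Fin (L + 2) → ℝ) :
    (L + 1 : ℝ) * (∑ i, η i) ^ L
      = (1 / 2) * ∑ F ∈ Finset.univ.filter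
          (fun F : Finset (Fin (L + 2)) => 1 ≤ F.card ∧ F.card ≤ L + 1),
          (∑ i ∈ F, η i) ^ (F.card - 1) * (∑ i ∈ Fᶜ, η i) ^ (Fᶜ.card - 1) := by
  classical
  set s : ℝ := ∑ i, η i with hs
  set P : Finset (Finset (Fin (L + 2))) :=
    Finset.univ.filter (fun F : Finset (Fin (L + 2)) => 1 ≤ F.card ∧ F.card ≤ L + 1) with hP
  set Q : ℝ → ℝ := fun t => ∑ F ∈ P,
      (t + ∑ i ∈ F, η i) ^ (F.card - 1) * (t + ∑ i ∈ Fᶜ, η i) ^ (Fᶜ.card - 1) with hQ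
  have hcardU : (Finset.univ : Finset (Fin (L + 2))).card = L + 2 := by
    simp
  -- the key polynomial relation
  have hrel : ∀ t : ℝ, t ^ 2 * Q t + 2 * (t * (t + s) ^ (L + 1))
      = 2 * t * (2 * t + s) ^ (L + 1) := by
    intro t
    have hG := keyG η (Finset.univ : Finset (Fin (L + 2))) Finset.univ_nonempty t t
    rw [Finset.powerset_univ, hcardU] at hG
    have hsplit := Finset.sum_filter_add_sum_filter_not Finset.univ
      (fun F : Finset (Fin (L + 2)) => 1 ≤ F.card ∧ F.card ≤ L + 1)
      (fun F => phiH η t F * phiH η t (Finset.univ \ F))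
    have hnotP : Finset.univ.filter
        (fun F : Finset (Fin (L + 2)) => ¬(1 ≤ F.card ∧ F.card ≤ L + 1))
        = {∅, Finset.univ} := by
      ext F
      simp only [Finset.mem_filter, Finset.mem_univ, true_and, Finset.mem_insert,
        Finset.mem_singleton]
      constructor
      · intro h
        rcases not_and_or.mp h with h1 | h2
        · left
          have : F.card = 0 := by omega
          exact Finset.card_eq_zero.mp this
        · right
          have hle : F.card ≤ L + 2 := by
            simpa [hcardU] using Finset.card_le_card (Finset.subset_univ F)
          have : F.card = L + 2 := by omega
          apply Finset.eq_univ_of_card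
          simpa using this
      · rintro (rfl | rfl)
        · simp
        · intro h
          simp only [Finset.card_univ, Fintype.card_fin] at h
          omega
    have hne : (∅ : Finset (Fin (L + 2))) ≠ Finset.univ := by
      intro h
      have := Finset.univ_nonempty (α := Fin (L + 2))
      rw [← h] at this
      exact Finset.not_nonempty_empty this
    have hPterm : ∀ F ∈ P, phiH η t F * phiH η t (Finset.univ \ F)
        = t ^ 2 * ((t + ∑ i ∈ F, η i) ^ (F.card - 1)
            * (t + ∑ i ∈ Fᶜ, η i) ^ (Fᶜ.card - 1)) := by
      intro F hF
      rw [hP, Finset.mem_filter] at hF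
      obtain ⟨-, h1, h2⟩ := hF
      have hFne : F ≠ ∅ := by
        intro h; rw [h] at h1; simp at h1
      have hFc : Finset.univ \ F = Fᶜ := (Finset.compl_eq_univ_sdiff F).symm
      have hFcne : Fᶜ ≠ ∅ := by
        intro h
        have hc := Finset.card_compl F
        rw [h, Finset.card_empty, Fintype.card_fin] at hc
        omega
      rw [hFc, phiH_ne η t hFne, phiH_ne η t hFcne]
      ring
    rw [← hsplit, hnotP, Finset.sum_pair hne] at hG
    have hEterm : phiH η t ∅ * phiH η t (Finset.univ \ ∅) = t * (t + s) ^ (L + 1) := by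
      rw [phiH_empty, Finset.sdiff_empty,
        phiH_ne η t (Finset.univ_nonempty.ne_empty), hcardU]
      simp [hs]
    have hUterm : phiH η t Finset.univ * phiH η t (Finset.univ \ Finset.univ)
        = t * (t + s) ^ (L + 1) := by
      rw [Finset.sdiff_self, phiH_empty,
        phiH_ne η t (Finset.univ_nonempty.ne_empty), hcardU]
      simp [hs]
    rw [Finset.sum_congr rfl hPterm, ← Finset.mul_sum, hEterm, hUterm] at hG
    rw [show L + 2 - 1 = L + 1 by omega,
      show t + t + ∑ i, η i = 2 * t + ∑ i, η i by ring,
      show t + t = 2 * t by ring] at hG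
    have hQt : Q t = ∑ F ∈ P,
        (t + ∑ i ∈ F, η i) ^ (F.card - 1) * (t + ∑ i ∈ Fᶜ, η i) ^ (Fᶜ.card - 1) := rfl
    rw [hQt, hs]
    linarith [hG]
  -- derivative setup
  have hg : HasDerivAt (fun t : ℝ => 2 * (2 * t + s) ^ (L + 1) - 2 * (t + s) ^ (L + 1))
      (2 * (L + 1) * s ^ L) 0 := by
    have h1 : HasDerivAt (fun t : ℝ => 2 * t + s) 2 0 := by
      simpa using ((hasDerivAt_id (0 : ℝ)).const_mul 2).add_const s
    have h2 : HasDerivAt (fun t : ℝ => t + s) 1 0 := (hasDerivAt_id 0).add_const s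
    have h3 := ((h1.fun_pow (L + 1)).const_mul 2).fun_sub ((h2.fun_pow (L + 1)).const_mul 2)
    refine h3.congr_deriv ?_
    push_cast
    simp
    ring
  have hg0 : (fun t : ℝ => 2 * (2 * t + s) ^ (L + 1) - 2 * (t + s) ^ (L + 1)) 0 = 0 := by
    simp
  have hslope : Filter.Tendsto
      (fun t : ℝ => (2 * (2 * t + s) ^ (L + 1) - 2 * (t + s) ^ (L + 1)) / t)
      (nhdsWithin 0 {0}ᶜ) (nhds (2 * (L + 1) * s ^ L)) := by
    have := hasDerivAt_iff_tendsto_slope.mp hg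
    refine this.congr' ?_
    filter_upwards [self_mem_nhdsWithin] with t ht
    rw [slope_def_field]
    norm_num
  have hQcont : Continuous Q := by
    rw [hQ]
    apply continuous_finset_sum
    intro F _
    exact ((continuous_id.add continuous_const).pow _).mul
      ((continuous_id.add continuous_const).pow _)
  have hQtend : Filter.Tendsto Q (nhdsWithin 0 {0}ᶜ) (nhds (Q 0)) :=
    (hQcont.tendsto 0).mono_left nhdsWithin_le_nhds
  have hQeq : ∀ t ∈ ({0}ᶜ : Set ℝ),
      Q t = (2 * (2 * t + s) ^ (L + 1) - 2 * (t + s) ^ (L + 1)) / t := by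
    intro t ht
    have ht0 : t ≠ 0 := ht
    rw [eq_div_iff ht0]
    refine mul_left_cancel₀ ht0 ?_
    linear_combination hrel t
  have hQtend' : Filter.Tendsto Q (nhdsWithin 0 {0}ᶜ) (nhds (2 * (L + 1) * s ^ L)) := by
    refine hslope.congr' ?_
    filter_upwards [self_mem_nhdsWithin] with t ht
    exact (hQeq t ht).symm
  have hQ0 : Q 0 = 2 * (L + 1) * s ^ L :=
    tendsto_nhds_unique hQtend hQtend'
  have hQ0' : Q 0 = ∑ F ∈ P,
      (∑ i ∈ F, η i) ^ (F.card - 1) * (∑ i ∈ Fᶜ, η i) ^ (Fᶜ.card - 1) := by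
    rw [hQ]
    simp
  rw [← hQ0', hQ0]
  ring
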